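/- Let m ≥ 2 be even. The number of bitstrings u of length 4m with exactly m ones that satisfy the cyclic Gale evenness condition and are completely labeled with respect to the triple Morris labeling λ equals 3^{m/2} + 1. Moreover, every such bitstring other than 1^m 0^{3m} satisfies u_i = 0 for all i ∈ {1,…,m} (so in the corresponding m×3m unit vector game there are exactly 3^{m/2} Nash equilibria, each with full support for player 1). -/

import Mathlib

/-- The string `τ` of `m` labels: `τ(1) = 1`, `τ(i) = i + (−1)^i` for
`2 ≤ i ≤ m−1`, `τ(m) = m`. -/
def tauStr (m : ℕ) (i : ℕ) : ℕ :=
  if i = 1 then 1 else if i = m then m else if Even i then i + 1 else i - 1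

/-- The string `σ`, which is `τ` reversed: `σ(i) = τ(m−i+1)`. -/
def sigmaStr (m : ℕ) (i : ℕ) : ℕ :=
  tauStr m (m - i + 1)

/-- The triple Morris labeling of positions `1,…,4m`: `λ(i) = i` for
`1 ≤ i ≤ m`, and positions `m+1,…,4m` carry, in order, the concatenated string
`στσ`. -/
def tripleMorrisLab (m : ℕ) (p : ℕ) : ℕ :=
  if p ≤ m then p
  else if p ≤ 2 * m then sigmaStr m (p - m)
  else if p ≤ 3 * m then tauStr m (p - 2 * m)
  else sigmaStr m (p - 3 * m)

/-- The cyclic successor structure on positions `1,…,f`: `cyc f k` reduces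
`k ≥ 1` to its representative in `{1,…,f}` modulo `f`. -/
def cyc (f : ℕ) (k : ℕ) : ℕ := (k - 1) % f + 1

/-- Cyclic Gale evenness condition for a bitstring `u` on positions `1,…,f`:
every maximal block of consecutive ones in the cyclic order has even length
(a maximal block starts at position `s` whose cyclic predecessor carries a `0`,
consists of `L` consecutive ones, and is followed by a `0`). -/
def CyclicGaleEven (f : ℕ) (u : ℕ → Bool) : Prop :=
  ∀ s L : ℕ, 1 ≤ s → s ≤ f →
    u (cyc f (s + f - 1)) = false →
    (∀ t, t < L → u (cyc f (s + t)) = true) →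
    u (cyc f (s + L)) = false → Even L

namespace UVG

def alab (κ : ℕ) : ℕ := if κ = 1 then 1 else 2*κ - 2
def blab (m κ : ℕ) : ℕ := if 2*κ = m then m else 2*κ + 1

lemma cyc_eval {f x : ℕ} (hf : 1 ≤ f) (h1 : 1 ≤ x) (h2 : x ≤ 2*f) :
    cyc f x = if x ≤ f then x else x - f := by
  unfold cyc
  split_ifs with h
  · rw [Nat.mod_eq_of_lt (by omega)]; omega
  · rw [Nat.mod_eq_sub_mod (by omega), Nat.mod_eq_of_lt (by omega)]; omega

lemma cyc_add_self {f x : ℕ} (h1 : 1 ≤ x) : cyc f (x + f) = cyc f x := by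
  unfold cyc
  rw [show x + f - 1 = (x - 1) + f from by omega, Nat.add_mod_right]

lemma even_run {m : ℕ} {S : Finset ℕ} (hm : 1 ≤ m)
    (hGale : CyclicGaleEven (4*m) (fun i => decide (i ∈ S)))
    {a b : ℕ} (h1 : 1 ≤ a) (hab : a ≤ b) (hb : b ≤ 4*m)
    (hrun : ∀ q, a ≤ q → q ≤ b → q ∈ S)
    (hlo : a - 1 ∉ S) (hlo1 : a = 1 → 4*m ∉ S)
    (hhi : b + 1 ∉ S) (hhi1 : b = 4*m → (1:ℕ) ∉ S) :
    Even (b - a + 1) := by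
  have hf : 1 ≤ 4*m := by omega
  apply hGale a (b - a + 1) h1 (by omega)
  · show decide (cyc (4*m) (a + 4*m - 1) ∈ S) = false
    have hc : cyc (4*m) (a + 4*m - 1) = if a = 1 then 4*m else a - 1 := by
      have h := cyc_eval (f := 4*m) (x := a + 4*m - 1) hf (by omega) (by omega)
      split_ifs at h ⊢ <;> omega
    rw [hc]
    split_ifs with h
    · simpa using hlo1 h
    · simpa using hlo
  · intro t ht
    show decide (cyc (4*m) (a + t) ∈ S) = true
    have hc : cyc (4*m) (a + t) = a + t := by
      rw [cyc_eval hf (by omega) (by omega), if_pos (by omega)]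
    rw [hc]; simpa using hrun (a + t) (by omega) (by omega)
  · show decide (cyc (4*m) (a + (b - a + 1)) ∈ S) = false
    have hc : cyc (4*m) (a + (b - a + 1)) = if b = 4*m then 1 else b + 1 := by
      have h := cyc_eval (f := 4*m) (x := a + (b - a + 1)) hf (by omega) (by omega)
      split_ifs at h ⊢ <;> omega
    rw [hc]
    split_ifs with h
    · simpa using hhi1 h
    · simpa using hhi

lemma left_end {S : Finset ℕ} {p : ℕ} (hp : p ∈ S) (h0 : (0:ℕ) ∉ S) :
    ∃ a, 1 ≤ a ∧ a ≤ p ∧ (∀ q, a ≤ q → q ≤ p → q ∈ S) ∧ a - 1 ∉ S := by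
  classical
  set T := (Finset.range (p+1)).filter (fun x => Finset.Icc x p ⊆ S) with hT
  have hpT : p ∈ T := by
    simp only [hT, Finset.mem_filter, Finset.mem_range]
    refine ⟨by omega, fun q hq => ?_⟩
    rw [Finset.mem_Icc] at hq
    rw [show q = p from by omega]; exact hp
  have hne : T.Nonempty := ⟨p, hpT⟩
  set a := T.min' hne with ha
  have haT : a ∈ T := T.min'_mem hne
  simp only [hT, Finset.mem_filter, Finset.mem_range] at haT
  have hicc : ∀ q, a ≤ q → q ≤ p → q ∈ S := fun q h1 h2 =>
    haT.2 (by rw [Finset.mem_Icc]; exact ⟨h1, h2⟩)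
  have ha1 : 1 ≤ a := by
    by_contra h
    exact h0 (hicc 0 (by omega) (by omega))
  refine ⟨a, ha1, by omega, hicc, fun hmem => ?_⟩
  have : a - 1 ∈ T := by
    simp only [hT, Finset.mem_filter, Finset.mem_range]
    refine ⟨by omega, fun q hq => ?_⟩
    rw [Finset.mem_Icc] at hq
    rcases Nat.lt_or_ge q a with h | h
    · rw [show q = a - 1 from by omega]; exact hmem
    · exact hicc q h hq.2
  have := T.min'_le _ this
  omega

lemma right_end {m : ℕ} {S : Finset ℕ} (hsub : S ⊆ Finset.Icc 1 (4*m)) {p : ℕ} (hp : p ∈ S) :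
    ∃ b, p ≤ b ∧ b ≤ 4*m ∧ (∀ q, p ≤ q → q ≤ b → q ∈ S) ∧ b + 1 ∉ S := by
  classical
  have hp4 : p ≤ 4*m := by have := hsub hp; rw [Finset.mem_Icc] at this; omega
  set T := (Finset.Icc p (4*m)).filter (fun x => Finset.Icc p x ⊆ S) with hT
  have hpT : p ∈ T := by
    simp only [hT, Finset.mem_filter, Finset.mem_Icc]
    refine ⟨⟨le_refl p, hp4⟩, fun q hq => ?_⟩
    rw [Finset.mem_Icc] at hq
    rw [show q = p from by omega]; exact hp
  have hne : T.Nonempty := ⟨p, hpT⟩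
  set b := T.max' hne with hb
  have hbT : b ∈ T := T.max'_mem hne
  simp only [hT, Finset.mem_filter, Finset.mem_Icc] at hbT
  have hicc : ∀ q, p ≤ q → q ≤ b → q ∈ S := fun q h1 h2 =>
    hbT.2 (by rw [Finset.mem_Icc]; exact ⟨h1, h2⟩)
  refine ⟨b, hbT.1.1, hbT.1.2, hicc, fun hmem => ?_⟩
  have hb4 : b + 1 ≤ 4*m := by have := hsub hmem; rw [Finset.mem_Icc] at this; omega
  have : b + 1 ∈ T := by
    simp only [hT, Finset.mem_filter, Finset.mem_Icc]
    refine ⟨⟨by omega, hb4⟩, fun q hq => ?_⟩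
    rw [Finset.mem_Icc] at hq
    rcases Nat.lt_or_ge b q with h | h
    · rw [show q = b + 1 from by omega]; exact hmem
    · exact hicc q hq.1 h
  have := T.le_max' _ this
  omega

end UVG

namespace UVG

lemma lam_seg0 {m p : ℕ} (h1 : 1 ≤ p) (h2 : p ≤ m) : tripleMorrisLab m p = p := by
  unfold tripleMorrisLab; rw [if_pos h2]

lemma lam_seg1 {m i : ℕ} (h1 : 1 ≤ i) (h2 : i ≤ m) :
    tripleMorrisLab m (m + i) = tauStr m (m - i + 1) := by
  unfold tripleMorrisLab sigmaStr
  rw [if_neg (by omega), if_pos (by omega)]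
  congr 1; omega

lemma lam_seg2 {m i : ℕ} (h1 : 1 ≤ i) (h2 : i ≤ m) :
    tripleMorrisLab m (2*m + i) = tauStr m i := by
  unfold tripleMorrisLab
  rw [if_neg (by omega), if_neg (by omega), if_pos (by omega)]
  congr 1; omega

lemma lam_seg3 {m i : ℕ} (h1 : 1 ≤ i) (h2 : i ≤ m) :
    tripleMorrisLab m (3*m + i) = tauStr m (m - i + 1) := by
  unfold tripleMorrisLab sigmaStr
  rw [if_neg (by omega), if_neg (by omega), if_neg (by omega)]
  congr 1; omega

lemma tau_one (m : ℕ) : tauStr m 1 = 1 := by simp [tauStr]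

lemma tau_last {m : ℕ} (hm : 2 ≤ m) : tauStr m m = m := by
  unfold tauStr; rw [if_neg (by omega), if_pos rfl]

lemma tau_even {m i : ℕ} (h0 : i % 2 = 0) (h1 : 2 ≤ i) (h2 : i + 2 ≤ m) : tauStr m i = i + 1 := by
  unfold tauStr
  rw [if_neg (by omega), if_neg (by omega), if_pos (Nat.even_iff.2 h0)]

lemma tau_odd {m i : ℕ} (h0 : i % 2 = 1) (h1 : 3 ≤ i) (h2 : i + 1 ≤ m) : tauStr m i = i - 1 := by
  unfold tauStr
  rw [if_neg (by omega), if_neg (by omega), if_neg (by rw [Nat.even_iff]; omega)]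

lemma tau_a {m κ : ℕ} (hκ1 : 1 ≤ κ) (hκ2 : 2*κ ≤ m) : tauStr m (2*κ - 1) = alab κ := by
  unfold alab
  split_ifs with h
  · rw [show 2*κ - 1 = 1 from by omega, tau_one]
  · rw [tau_odd (by omega) (by omega) (by omega)]; omega

lemma tau_b {m κ : ℕ} (hm : 2 ≤ m) (hme : m % 2 = 0) (hκ1 : 1 ≤ κ) (hκ2 : 2*κ ≤ m) :
    tauStr m (2*κ) = blab m κ := by
  unfold blab
  split_ifs with h
  · rw [h, tau_last hm]
  · rw [tau_even (by omega) (by omega) (by omega)]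

lemma lam_d0b {m κ : ℕ} (hm : 2 ≤ m) (hme : m % 2 = 0) (hκ1 : 1 ≤ κ) (hκ2 : 2*κ ≤ m) :
    tripleMorrisLab m (2*m - 2*κ + 1) = blab m κ := by
  rw [show 2*m - 2*κ + 1 = m + (m - 2*κ + 1) from by omega,
    lam_seg1 (by omega) (by omega), show m - (m - 2*κ + 1) + 1 = 2*κ from by omega,
    tau_b hm hme hκ1 hκ2]

lemma lam_d0a {m κ : ℕ} (hm : 2 ≤ m) (hme : m % 2 = 0) (hκ1 : 1 ≤ κ) (hκ2 : 2*κ ≤ m) :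
    tripleMorrisLab m (2*m - 2*κ + 2) = alab κ := by
  rw [show 2*m - 2*κ + 2 = m + (m - 2*κ + 2) from by omega,
    lam_seg1 (by omega) (by omega), show m - (m - 2*κ + 2) + 1 = 2*κ - 1 from by omega,
    tau_a hκ1 hκ2]

lemma lam_d1a {m κ : ℕ} (hm : 2 ≤ m) (hme : m % 2 = 0) (hκ1 : 1 ≤ κ) (hκ2 : 2*κ ≤ m) :
    tripleMorrisLab m (2*m + 2*κ - 1) = alab κ := by
  rw [show 2*m + 2*κ - 1 = 2*m + (2*κ - 1) from by omega,
    lam_seg2 (by omega) (by omega), tau_a hκ1 hκ2]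

lemma lam_d1b {m κ : ℕ} (hm : 2 ≤ m) (hme : m % 2 = 0) (hκ1 : 1 ≤ κ) (hκ2 : 2*κ ≤ m) :
    tripleMorrisLab m (2*m + 2*κ) = blab m κ := by
  rw [show 2*m + 2*κ = 2*m + (2*κ) from rfl, lam_seg2 (by omega) (by omega),
    tau_b hm hme hκ1 hκ2]

lemma lam_d2b {m κ : ℕ} (hm : 2 ≤ m) (hme : m % 2 = 0) (hκ1 : 1 ≤ κ) (hκ2 : 2*κ ≤ m) :
    tripleMorrisLab m (4*m - 2*κ + 1) = blab m κ := by
  rw [show 4*m - 2*κ + 1 = 3*m + (m - 2*κ + 1) from by omega,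
    lam_seg3 (by omega) (by omega), show m - (m - 2*κ + 1) + 1 = 2*κ from by omega,
    tau_b hm hme hκ1 hκ2]

lemma lam_d2a {m κ : ℕ} (hm : 2 ≤ m) (hme : m % 2 = 0) (hκ1 : 1 ≤ κ) (hκ2 : 2*κ ≤ m) :
    tripleMorrisLab m (4*m - 2*κ + 2) = alab κ := by
  rw [show 4*m - 2*κ + 2 = 3*m + (m - 2*κ + 2) from by omega,
    lam_seg3 (by omega) (by omega), show m - (m - 2*κ + 2) + 1 = 2*κ - 1 from by omega,
    tau_a hκ1 hκ2]

lemma tau_inv_a {m i κ : ℕ} (hm : 2 ≤ m) (hme : m % 2 = 0) (hi1 : 1 ≤ i) (hi2 : i ≤ m)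
    (hκ1 : 1 ≤ κ) (hκ2 : 2*κ ≤ m) (h : tauStr m i = alab κ) : i = 2*κ - 1 := by
  unfold tauStr alab at h
  have he := Nat.even_iff (n := i)
  split_ifs at h <;> simp [he] at * <;> omega

lemma tau_inv_b {m i κ : ℕ} (hm : 2 ≤ m) (hme : m % 2 = 0) (hi1 : 1 ≤ i) (hi2 : i ≤ m)
    (hκ1 : 1 ≤ κ) (hκ2 : 2*κ ≤ m) (h : tauStr m i = blab m κ) : i = 2*κ := by
  unfold tauStr blab at h
  have he := Nat.even_iff (n := i)
  split_ifs at h <;> simp [he] at * <;> omega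

lemma lam_inv_a {m p κ : ℕ} (hm : 2 ≤ m) (hme : m % 2 = 0) (hp1 : 1 ≤ p) (hp2 : p ≤ 4*m)
    (hκ1 : 1 ≤ κ) (hκ2 : 2*κ ≤ m) (h : tripleMorrisLab m p = alab κ) :
    p = alab κ ∨ p = 2*m - 2*κ + 2 ∨ p = 2*m + 2*κ - 1 ∨ p = 4*m - 2*κ + 2 := by
  rcases Nat.lt_or_ge m p with h1 | h1
  · rcases Nat.lt_or_ge (2*m) p with h2 | h2
    · rcases Nat.lt_or_ge (3*m) p with h3 | h3
      · rw [show p = 3*m + (p - 3*m) from by omega, lam_seg3 (by omega) (by omega)] at h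
        have := tau_inv_a hm hme (i := m - (p - 3*m) + 1) (by omega) (by omega) hκ1 hκ2 h
        omega
      · rw [show p = 2*m + (p - 2*m) from by omega, lam_seg2 (by omega) (by omega)] at h
        have := tau_inv_a hm hme (i := p - 2*m) (by omega) (by omega) hκ1 hκ2 h
        omega
    · rw [show p = m + (p - m) from by omega, lam_seg1 (by omega) (by omega)] at h
      have := tau_inv_a hm hme (i := m - (p - m) + 1) (by omega) (by omega) hκ1 hκ2 h
      omega
  · rw [lam_seg0 hp1 h1] at h
    exact Or.inl h

lemma lam_inv_b {m p κ : ℕ} (hm : 2 ≤ m) (hme : m % 2 = 0) (hp1 : 1 ≤ p) (hp2 : p ≤ 4*m)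
    (hκ1 : 1 ≤ κ) (hκ2 : 2*κ ≤ m) (h : tripleMorrisLab m p = blab m κ) :
    p = blab m κ ∨ p = 2*m - 2*κ + 1 ∨ p = 2*m + 2*κ ∨ p = 4*m - 2*κ + 1 := by
  rcases Nat.lt_or_ge m p with h1 | h1
  · rcases Nat.lt_or_ge (2*m) p with h2 | h2
    · rcases Nat.lt_or_ge (3*m) p with h3 | h3
      · rw [show p = 3*m + (p - 3*m) from by omega, lam_seg3 (by omega) (by omega)] at h
        have := tau_inv_b hm hme (i := m - (p - 3*m) + 1) (by omega) (by omega) hκ1 hκ2 h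
        omega
      · rw [show p = 2*m + (p - 2*m) from by omega, lam_seg2 (by omega) (by omega)] at h
        have := tau_inv_b hm hme (i := p - 2*m) (by omega) (by omega) hκ1 hκ2 h
        omega
    · rw [show p = m + (p - m) from by omega, lam_seg1 (by omega) (by omega)] at h
      have := tau_inv_b hm hme (i := m - (p - m) + 1) (by omega) (by omega) hκ1 hκ2 h
      omega
  · rw [lam_seg0 hp1 h1] at h
    exact Or.inl h

end UVG

namespace UVG

def dom (m : ℕ) (e : Fin 3) (κ : ℕ) : Finset ℕ :=
  if e = 0 then {2*m - 2*κ + 1, 2*m - 2*κ + 2}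
  else if e = 1 then {2*m + 2*κ - 1, 2*m + 2*κ}
  else {4*m - 2*κ + 1, 4*m - 2*κ + 2}

lemma dom_cases {m κ p : ℕ} (e : Fin 3) (h : p ∈ dom m e κ) :
    (p = 2*m - 2*κ + 1 ∨ p = 2*m - 2*κ + 2) ∨ (p = 2*m + 2*κ - 1 ∨ p = 2*m + 2*κ) ∨
      (p = 4*m - 2*κ + 1 ∨ p = 4*m - 2*κ + 2) := by
  fin_cases e <;> simp [dom] at h <;> tauto

lemma dom_bounds {m κ p : ℕ} (hm : 2 ≤ m) (hκ1 : 1 ≤ κ) (hκ2 : 2*κ ≤ m) (e : Fin 3)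
    (h : p ∈ dom m e κ) : m + 1 ≤ p ∧ p ≤ 4*m := by
  rcases dom_cases e h with (h|h)|(h|h)|(h|h) <;> omega

lemma dom_card {m κ : ℕ} (hm : 2 ≤ m) (hκ1 : 1 ≤ κ) (hκ2 : 2*κ ≤ m) (e : Fin 3) :
    (dom m e κ).card = 2 := by
  fin_cases e <;> simp [dom] <;> rw [Finset.card_pair (by omega)]

lemma dom_inj_kappa {m κ κ' p : ℕ} {e e' : Fin 3} (hm : 2 ≤ m)
    (hκ1 : 1 ≤ κ) (hκ2 : 2*κ ≤ m) (hκ1' : 1 ≤ κ') (hκ2' : 2*κ' ≤ m)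
    (h : p ∈ dom m e κ) (h' : p ∈ dom m e' κ') : κ = κ' := by
  fin_cases e <;> fin_cases e' <;> simp [dom] at h h' <;> omega

lemma dom_inj_e {m κ p : ℕ} {e e' : Fin 3} (hm : 2 ≤ m)
    (hκ1 : 1 ≤ κ) (hκ2 : 2*κ ≤ m)
    (h : p ∈ dom m e κ) (h' : p ∈ dom m e' κ) : e = e' := by
  fin_cases e <;> fin_cases e' <;> first
    | rfl
    | (exfalso; simp [dom] at h h'; omega)

lemma dom_pair {m κ q : ℕ} (hκ1 : 1 ≤ κ) (hκ2 : 2*κ ≤ m) (hq : q % 2 = 1) (e : Fin 3) :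
    q ∈ dom m e κ ↔ q + 1 ∈ dom m e κ := by
  fin_cases e <;> simp [dom] <;> omega

lemma dom_lab_a {m κ : ℕ} (hm : 2 ≤ m) (hme : m % 2 = 0) (hκ1 : 1 ≤ κ) (hκ2 : 2*κ ≤ m)
    (e : Fin 3) : ∃ p ∈ dom m e κ, tripleMorrisLab m p = alab κ := by
  fin_cases e
  · exact ⟨2*m - 2*κ + 2, by simp [dom], lam_d0a hm hme hκ1 hκ2⟩
  · exact ⟨2*m + 2*κ - 1, by simp [dom], lam_d1a hm hme hκ1 hκ2⟩
  · exact ⟨4*m - 2*κ + 2, by simp [dom], lam_d2a hm hme hκ1 hκ2⟩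

lemma dom_lab_b {m κ : ℕ} (hm : 2 ≤ m) (hme : m % 2 = 0) (hκ1 : 1 ≤ κ) (hκ2 : 2*κ ≤ m)
    (e : Fin 3) : ∃ p ∈ dom m e κ, tripleMorrisLab m p = blab m κ := by
  fin_cases e
  · exact ⟨2*m - 2*κ + 1, by simp [dom], lam_d0b hm hme hκ1 hκ2⟩
  · exact ⟨2*m + 2*κ, by simp [dom], lam_d1b hm hme hκ1 hκ2⟩
  · exact ⟨4*m - 2*κ + 1, by simp [dom], lam_d2b hm hme hκ1 hκ2⟩

def sol (m : ℕ) (c : Fin (m/2) → Fin 3) : Finset ℕ :=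
  Finset.univ.biUnion fun k => dom m (c k) (k.1 + 1)

lemma mem_sol {m : ℕ} {c : Fin (m/2) → Fin 3} {p : ℕ} :
    p ∈ sol m c ↔ ∃ k : Fin (m/2), p ∈ dom m (c k) (k.1 + 1) := by
  simp [sol]

lemma sol_subset {m : ℕ} (hm : 2 ≤ m) (hme : m % 2 = 0) (c : Fin (m/2) → Fin 3) :
    sol m c ⊆ Finset.Icc (m+1) (4*m) := by
  intro p hp
  rw [mem_sol] at hp
  obtain ⟨k, hk⟩ := hp
  have hk2 : 2*(k.1+1) ≤ m := by have := k.2; omega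
  have := dom_bounds hm (by omega) hk2 _ hk
  rw [Finset.mem_Icc]; omega

lemma card_sol {m : ℕ} (hm : 2 ≤ m) (hme : m % 2 = 0) (c : Fin (m/2) → Fin 3) :
    (sol m c).card = m := by
  rw [sol, Finset.card_biUnion]
  · have h : ∀ k : Fin (m/2), (dom m (c k) (k.1+1)).card = 2 := fun k =>
      dom_card hm (by omega) (by have := k.2; omega) _
    rw [Finset.sum_congr rfl (fun k _ => h k), Finset.sum_const, Finset.card_univ,
      Fintype.card_fin, smul_eq_mul]
    omega
  · intro k _ k' _ hkk'
    simp only [Function.onFun]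
    rw [Finset.disjoint_left]
    intro p hp hp'
    have := dom_inj_kappa hm (by omega) (by have := k.2; omega) (by omega)
      (by have := k'.2; omega) hp hp'
    exact hkk' (Fin.ext (by omega))

lemma sol_injective {m : ℕ} (hm : 2 ≤ m) (hme : m % 2 = 0) :
    Function.Injective (sol m) := by
  intro c c' h
  funext k
  obtain ⟨p, hp, -⟩ := dom_lab_a hm hme (κ := k.1+1) (by omega) (by have := k.2; omega) (c k)
  have hps : p ∈ sol m c' := by rw [← h, mem_sol]; exact ⟨k, hp⟩
  rw [mem_sol] at hps
  obtain ⟨k', hk'⟩ := hps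
  have hκ := dom_inj_kappa hm (by omega) (by have := k.2; omega) (by omega)
    (by have := k'.2; omega) hp hk'
  have hkk : k = k' := Fin.ext (by omega)
  subst hkk
  exact dom_inj_e hm (by omega) (by have := k.2; omega) hp hk'

lemma sol_pair {m : ℕ} (hme : m % 2 = 0) (c : Fin (m/2) → Fin 3) {q : ℕ} (hq : q % 2 = 1) :
    q ∈ sol m c ↔ q + 1 ∈ sol m c := by
  simp only [mem_sol]
  constructor <;> rintro ⟨k, hk⟩ <;> refine ⟨k, ?_⟩
  · exact (dom_pair (by omega) (by have := k.2; omega) hq _).1 hk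
  · exact (dom_pair (by omega) (by have := k.2; omega) hq _).2 hk

lemma gale_of_pairs {f : ℕ} {S : Finset ℕ} (hf : 2 ≤ f) (hfe : f % 2 = 0)
    (hpair : ∀ q, q % 2 = 1 → (q ∈ S ↔ q + 1 ∈ S)) :
    CyclicGaleEven f (fun i => decide (i ∈ S)) := by
  intro s L hs1 hs2 hpred hones hsucc
  by_contra hodd
  rw [Nat.even_iff] at hodd
  have hL : L % 2 = 1 := by omega
  have hL1 : 1 ≤ L := by omega
  simp only [decide_eq_false_iff_not] at hpred hsucc
  have hLf : L < f := by
    by_contra hge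
    have h1 := hones (L - f) (by omega)
    simp only [decide_eq_true_eq] at h1
    have hc : cyc f (s + L) = cyc f (s + (L - f)) := by
      rw [← cyc_add_self (f := f) (x := s + (L - f)) (by omega)]
      congr 1; omega
    rw [hc] at hsucc
    exact hsucc h1
  have hsS : s ∈ S := by
    have h1 := hones 0 (by omega)
    simp only [decide_eq_true_eq] at h1
    rwa [show s + 0 = s from rfl, cyc_eval (by omega) hs1 (by omega), if_pos hs2] at h1
  rcases Nat.even_or_odd s with hse | hso
  · rw [Nat.even_iff] at hse
    have hc : cyc f (s + f - 1) = s - 1 := by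
      rw [show s + f - 1 = s - 1 + f from by omega, cyc_add_self (by omega),
        cyc_eval (by omega) (by omega) (by omega), if_pos (by omega)]
    rw [hc] at hpred
    exact hpred ((hpair (s-1) (by omega)).2 (by rwa [show s - 1 + 1 = s from by omega]))
  · rw [Nat.odd_iff] at hso
    have hq := hones (L-1) (by omega)
    simp only [decide_eq_true_eq] at hq
    by_cases hcase : s + L - 1 ≤ f
    · have hr : cyc f (s + (L-1)) = s + L - 1 := by
        rw [cyc_eval (by omega) (by omega) (by omega), if_pos (by omega)]
        omega
      rw [hr] at hq
      have h2 := (hpair (s + L - 1) (by omega)).1 hq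
      have hc : cyc f (s + L) = s + L := by
        rw [cyc_eval (by omega) (by omega) (by omega), if_pos (by omega)]
      rw [hc] at hsucc
      exact hsucc (by rwa [show s + L - 1 + 1 = s + L from by omega] at h2)
    · have hr : cyc f (s + (L-1)) = s + L - 1 - f := by
        rw [cyc_eval (by omega) (by omega) (by omega), if_neg (by omega)]
        omega
      rw [hr] at hq
      have h2 := (hpair (s + L - 1 - f) (by omega)).1 hq
      have hc : cyc f (s + L) = s + L - f := by
        rw [cyc_eval (by omega) (by omega) (by omega), if_neg (by omega)]
      rw [hc] at hsucc
      exact hsucc (by rwa [show s + L - 1 - f + 1 = s + L - f from by omega] at h2)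

lemma exists_kappa {m v : ℕ} (hm : 2 ≤ m) (hme : m % 2 = 0) (hv1 : 1 ≤ v) (hv2 : v ≤ m) :
    ∃ κ, 1 ≤ κ ∧ 2*κ ≤ m ∧ (v = alab κ ∨ v = blab m κ) := by
  by_cases h1 : v % 2 = 1
  · by_cases hv1' : v = 1
    · exact ⟨1, by omega, by omega, Or.inl (by simp [alab, hv1'])⟩
    · refine ⟨(v-1)/2, by omega, by omega, Or.inr ?_⟩
      unfold blab; rw [if_neg (by omega)]; omega
  · by_cases hvm' : v = m
    · refine ⟨m/2, by omega, by omega, Or.inr ?_⟩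
      unfold blab; rw [if_pos (by omega)]; omega
    · refine ⟨v/2 + 1, by omega, by omega, Or.inl ?_⟩
      unfold alab; rw [if_neg (by omega)]; omega

lemma sol_image {m : ℕ} (hm : 2 ≤ m) (hme : m % 2 = 0) (c : Fin (m/2) → Fin 3) :
    (sol m c).image (tripleMorrisLab m) = Finset.Icc 1 m := by
  ext v
  simp only [Finset.mem_image, Finset.mem_Icc]
  constructor
  · rintro ⟨p, hp, rfl⟩
    rw [mem_sol] at hp
    obtain ⟨k, hk⟩ := hp
    have hκ1 : 1 ≤ k.1 + 1 := by omega
    have hκ2 : 2*(k.1+1) ≤ m := by have := k.2; omega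
    rcases dom_cases _ hk with (h|h)|(h|h)|(h|h) <;> subst h
    · rw [lam_d0b hm hme hκ1 hκ2]; unfold blab; split_ifs <;> omega
    · rw [lam_d0a hm hme hκ1 hκ2]; unfold alab; split_ifs <;> omega
    · rw [lam_d1a hm hme hκ1 hκ2]; unfold alab; split_ifs <;> omega
    · rw [lam_d1b hm hme hκ1 hκ2]; unfold blab; split_ifs <;> omega
    · rw [lam_d2b hm hme hκ1 hκ2]; unfold blab; split_ifs <;> omega
    · rw [lam_d2a hm hme hκ1 hκ2]; unfold alab; split_ifs <;> omega
  · rintro ⟨hv1, hv2⟩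
    obtain ⟨κ, hκ1, hκ2, hv⟩ := exists_kappa hm hme hv1 hv2
    have hklt : κ - 1 < m / 2 := by omega
    set k : Fin (m/2) := ⟨κ - 1, hklt⟩ with hkdef
    have hkk : k.1 + 1 = κ := by simp [hkdef]; omega
    rcases hv with hv | hv
    · obtain ⟨p, hp, hl⟩ := dom_lab_a hm hme hκ1 hκ2 (c k)
      exact ⟨p, mem_sol.2 ⟨k, by rwa [hkk]⟩, by rw [hl, hv]⟩
    · obtain ⟨p, hp, hl⟩ := dom_lab_b hm hme hκ1 hκ2 (c k)
      exact ⟨p, mem_sol.2 ⟨k, by rwa [hkk]⟩, by rw [hl, hv]⟩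

lemma icc_image {m : ℕ} (hm : 2 ≤ m) :
    (Finset.Icc 1 m).image (tripleMorrisLab m) = Finset.Icc 1 m := by
  ext v
  simp only [Finset.mem_image, Finset.mem_Icc]
  constructor
  · rintro ⟨p, ⟨h1, h2⟩, rfl⟩
    rw [lam_seg0 h1 h2]; exact ⟨h1, h2⟩
  · rintro ⟨h1, h2⟩
    exact ⟨v, ⟨h1, h2⟩, lam_seg0 h1 h2⟩

end UVG

namespace UVG

lemma classify {m : ℕ} (hm : 2 ≤ m) (hme : m % 2 = 0) {S : Finset ℕ}
    (hsub : S ⊆ Finset.Icc 1 (4*m)) (hcard : S.card = m)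
    (hGale : CyclicGaleEven (4*m) (fun i => decide (i ∈ S)))
    (himg : S.image (tripleMorrisLab m) = Finset.Icc 1 m) :
    S = Finset.Icc 1 m ∨ ∃ c : Fin (m/2) → Fin 3, S = sol m c := by
  have hm1 : 1 ≤ m := by omega
  have hinj : ∀ p ∈ S, ∀ q ∈ S, tripleMorrisLab m p = tripleMorrisLab m q → p = q := by
    have h := Finset.injOn_of_card_image_eq (s := S) (f := tripleMorrisLab m)
      (by rw [himg, Nat.card_Icc, hcard]; omega)
    exact fun p hp q hq hl => h (Finset.mem_coe.2 hp) (Finset.mem_coe.2 hq) hl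
  have hex : ∀ v, 1 ≤ v → v ≤ m → ∃ p ∈ S, tripleMorrisLab m p = v := by
    intro v h1 h2
    have : v ∈ S.image (tripleMorrisLab m) := by
      rw [himg, Finset.mem_Icc]; exact ⟨h1, h2⟩
    exact Finset.mem_image.1 this
  have hbound : ∀ p ∈ S, 1 ≤ p ∧ p ≤ 4*m := by
    intro p hp
    have := hsub hp; rw [Finset.mem_Icc] at this; exact this
  have h0 : (0:ℕ) ∉ S := fun h => by have := hbound 0 h; omega
  -- labeled members of established dominoes
  have domA : ∀ j, 1 ≤ j → 2*j ≤ m → (∃ e : Fin 3, ∀ x ∈ dom m e j, x ∈ S) →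
      ∃ q, q ∈ S ∧ tripleMorrisLab m q = alab j ∧
        (q = 2*m - 2*j + 2 ∨ q = 2*m + 2*j - 1 ∨ q = 4*m - 2*j + 2) := by
    rintro j hj1 hj2 ⟨e, he⟩
    obtain ⟨p, hp, hl⟩ := dom_lab_a hm hme hj1 hj2 e
    refine ⟨p, he p hp, hl, ?_⟩
    rcases dom_cases e hp with (h|h)|(h|h)|(h|h)
    · exfalso
      rw [h, lam_d0b hm hme hj1 hj2] at hl
      unfold alab blab at hl; split_ifs at hl <;> omega
    · exact Or.inl h
    · exact Or.inr (Or.inl h)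
    · exfalso
      rw [h, lam_d1b hm hme hj1 hj2] at hl
      unfold alab blab at hl; split_ifs at hl <;> omega
    · exfalso
      rw [h, lam_d2b hm hme hj1 hj2] at hl
      unfold alab blab at hl; split_ifs at hl <;> omega
    · exact Or.inr (Or.inr h)
  have domB : ∀ j, 1 ≤ j → 2*j ≤ m → (∃ e : Fin 3, ∀ x ∈ dom m e j, x ∈ S) →
      ∃ q, q ∈ S ∧ tripleMorrisLab m q = blab m j ∧
        ((q = 2*m - 2*j + 1 ∧ 2*m - 2*j + 2 ∈ S) ∨ (q = 2*m + 2*j ∧ 2*m + 2*j - 1 ∈ S) ∨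
          (q = 4*m - 2*j + 1 ∧ 4*m - 2*j + 2 ∈ S)) := by
    rintro j hj1 hj2 ⟨e, he⟩
    fin_cases e
    · exact ⟨2*m - 2*j + 1, he _ (by simp [dom]), lam_d0b hm hme hj1 hj2,
        Or.inl ⟨rfl, he _ (by simp [dom])⟩⟩
    · exact ⟨2*m + 2*j, he _ (by simp [dom]), lam_d1b hm hme hj1 hj2,
        Or.inr (Or.inl ⟨rfl, he _ (by simp [dom])⟩)⟩
    · exact ⟨4*m - 2*j + 1, he _ (by simp [dom]), lam_d2b hm hme hj1 hj2,
        Or.inr (Or.inr ⟨rfl, he _ (by simp [dom])⟩)⟩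
  have main : ∀ k, k ≤ m/2 →
      (∀ j, 1 ≤ j → j ≤ k → ∃ e : Fin 3, ∀ x ∈ dom m e j, x ∈ S) ∨
      (1 ≤ k ∧ ∀ i, 1 ≤ i → i ≤ 2*k → i ∈ S) := by
    intro k
    induction k with
    | zero => exact fun _ => Or.inl (fun j hj1 hj0 => by omega)
    | succ k ih =>
      intro hk1
      have hκ2 : 2*(k+1) ≤ m := by omega
      rcases ih (by omega) with hC | ⟨hk1', hP⟩
      · -- Classes branch
        obtain ⟨p, hpS, hpl⟩ := hex (alab (k+1))
          (by unfold alab; split_ifs <;> omega) (by unfold alab; split_ifs <;> omega)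
        have hp4 := hbound p hpS
        rcases lam_inv_a hm hme hp4.1 hp4.2 (by omega) hκ2 hpl with hp | hp | hp | hp
        · -- seg 0
          by_cases hk0 : k = 0
          · subst hk0
            have hp1 : p = 1 := by unfold alab at hp; simp at hp; exact hp
            rw [hp1] at hpS
            right
            refine ⟨le_refl 1, ?_⟩
            have h1lab : tripleMorrisLab m 1 = 1 := lam_seg0 le_rfl (by omega)
            have h4m : (4*m : ℕ) ∉ S := by
              intro h4
              have hl4 : tripleMorrisLab m (4*m) = alab 1 := by
                have := lam_d2a (κ := 1) hm hme le_rfl (by omega)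
                rwa [show 4*m - 2*1 + 2 = 4*m from by omega] at this
              have := hinj _ h4 _ hpS (by rw [hl4, h1lab]; simp [alab])
              omega
            have h2 : (2:ℕ) ∈ S := by
              by_contra h2
              have hev := even_run hm1 hGale (a := 1) (b := 1) le_rfl le_rfl (by omega)
                (fun q hq1 hq2 => by rw [show q = 1 from by omega]; exact hpS)
                h0 (fun _ => h4m) h2 (fun h => absurd h (by omega))
              rw [Nat.even_iff] at hev; omega
            intro i hi1 hi2
            have : i = 1 ∨ i = 2 := by omega
            rcases this with rfl | rfl
            exacts [hpS, h2]
          · -- k ≥ 1 : contradiction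
            exfalso
            have hpv : p = 2*k := by unfold alab at hp; rw [if_neg (by omega)] at hp; omega
            obtain ⟨q, hqS, hql, hqd⟩ := domB k (by omega) (by omega) (hC k (by omega) le_rfl)
            have h2k1 : 2*k+1 ∉ S := by
              intro hx
              have hlx : tripleMorrisLab m (2*k+1) = blab m k := by
                rw [lam_seg0 (by omega) (by omega)]; unfold blab; rw [if_neg (by omega)]
              have := hinj _ hx _ hqS (by rw [hlx, hql])
              rcases hqd with ⟨h,_⟩|⟨h,_⟩|⟨h,_⟩ <;> omega
            have h2km1 : 2*k-1 ∉ S := by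
              intro hx
              by_cases hk1'' : k = 1
              · subst hk1''
                obtain ⟨q', hq'S, hq'l, hq'd⟩ := domA 1 le_rfl (by omega) (hC 1 le_rfl le_rfl)
                have hlx : tripleMorrisLab m (2*1-1) = alab 1 := by
                  rw [lam_seg0 (by omega) (by omega)]; simp [alab]
                have := hinj _ hx _ hq'S (by rw [hlx, hq'l])
                rcases hq'd with h|h|h <;> omega
              · obtain ⟨q', hq'S, hq'l, hq'd⟩ := domB (k-1) (by omega) (by omega)
                  (hC (k-1) (by omega) (by omega))
                have hlx : tripleMorrisLab m (2*k-1) = blab m (k-1) := by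
                  rw [lam_seg0 (by omega) (by omega)]; unfold blab
                  rw [if_neg (by omega)]; omega
                have := hinj _ hx _ hq'S (by rw [hlx, hq'l])
                rcases hq'd with ⟨h,_⟩|⟨h,_⟩|⟨h,_⟩ <;> omega
            have hev := even_run hm1 hGale (a := 2*k) (b := 2*k) (by omega) le_rfl (by omega)
              (fun q' hq1 hq2 => by rw [show q' = 2*k from by omega, ← hpv]; exact hpS)
              (by rwa [show 2*k - 1 = 2*k-1 from rfl]) (fun h => absurd h (by omega))
              h2k1 (fun h => absurd h (by omega))
            rw [Nat.even_iff] at hev; omega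
        · -- σ1 : p = 2m - 2(k+1) + 2
          have hjoin : 2*m - 2*(k+1) + 1 ∈ S := by
            by_contra hnot
            obtain ⟨b, hpb, hb4, hrun', hb1⟩ := right_end hsub hpS
            have hb2m : b ≤ 2*m := by
              by_contra hgt
              have hx := hrun' (2*m) (by omega) (by omega)
              have hy := hrun' (2*m+1) (by omega) (by omega)
              have hlx : tripleMorrisLab m (2*m) = alab 1 := by
                have := lam_d0a (κ := 1) hm hme le_rfl (by omega)
                rwa [show 2*m - 2*1 + 2 = 2*m from by omega] at this
              have hly : tripleMorrisLab m (2*m+1) = alab 1 := by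
                have := lam_d1a (κ := 1) hm hme le_rfl (by omega)
                rwa [show 2*m + 2*1 - 1 = 2*m+1 from by omega] at this
              have := hinj _ hx _ hy (by rw [hlx, hly])
              omega
            have hev := even_run hm1 hGale (a := p) (b := b) (by omega) hpb hb4 hrun'
              (by rw [show p - 1 = 2*m - 2*(k+1) + 1 from by omega]; exact hnot)
              (fun h => absurd h (by omega)) hb1 (fun h => absurd h (by omega))
            rw [Nat.even_iff] at hev
            have hbodd : b % 2 = 1 := by omega
            have hj : 1 ≤ (2*m + 1 - b)/2 ∧ (2*m + 1 - b)/2 ≤ k ∧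
                b = 2*m - 2*((2*m + 1 - b)/2) + 1 := by omega
            set j := (2*m + 1 - b)/2 with hjdef
            have hbl : tripleMorrisLab m b = blab m j := by
              rw [hj.2.2]; exact lam_d0b hm hme hj.1 (by omega)
            obtain ⟨q, hqS, hql, hqd⟩ := domB j hj.1 (by omega) (hC j hj.1 hj.2.1)
            have hbq : b = q := hinj _ (hrun' b hpb le_rfl) _ hqS (by rw [hbl, hql])
            rcases hqd with ⟨hq1, hq2⟩|⟨hq1, hq2⟩|⟨hq1, hq2⟩
            · exact hb1 (by rw [show b + 1 = 2*m - 2*j + 2 from by omega]; exact hq2)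
            · omega
            · omega
          left
          intro j hj1 hj2
          rcases Nat.lt_or_ge j (k+1) with hlt | hge
          · exact hC j hj1 (by omega)
          · have hjk : j = k+1 := by omega
            subst hjk
            refine ⟨0, fun x hx => ?_⟩
            simp [dom] at hx
            rcases hx with h | h
            · rw [h]; exact hjoin
            · rw [h, ← hp]; exact hpS
        · -- τ : p = 2m + 2(k+1) - 1
          have hjoin : 2*m + 2*(k+1) ∈ S := by
            by_contra hnot
            obtain ⟨a, ha1, hap, hrun', halo⟩ := left_end hpS h0
            have ha2m : 2*m + 1 ≤ a := by
              by_contra hgt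
              have hx := hrun' (2*m) (by omega) (by omega)
              have hy := hrun' (2*m+1) (by omega) (by omega)
              have hlx : tripleMorrisLab m (2*m) = alab 1 := by
                have := lam_d0a (κ := 1) hm hme le_rfl (by omega)
                rwa [show 2*m - 2*1 + 2 = 2*m from by omega] at this
              have hly : tripleMorrisLab m (2*m+1) = alab 1 := by
                have := lam_d1a (κ := 1) hm hme le_rfl (by omega)
                rwa [show 2*m + 2*1 - 1 = 2*m+1 from by omega] at this
              have := hinj _ hx _ hy (by rw [hlx, hly])
              omega
            have hev := even_run hm1 hGale (a := a) (b := p) ha1 hap (by omega) hrun'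
              halo (fun h => absurd h (by omega))
              (by rw [show p + 1 = 2*m + 2*(k+1) from by omega]; exact hnot)
              (fun h => absurd h (by omega))
            rw [Nat.even_iff] at hev
            have hj : 1 ≤ (a - 2*m)/2 ∧ (a - 2*m)/2 ≤ k ∧ a = 2*m + 2*((a - 2*m)/2) := by
              omega
            set j := (a - 2*m)/2 with hjdef
            have hal : tripleMorrisLab m a = blab m j := by
              rw [hj.2.2]; exact lam_d1b hm hme hj.1 (by omega)
            obtain ⟨q, hqS, hql, hqd⟩ := domB j hj.1 (by omega) (hC j hj.1 hj.2.1)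
            have haq : a = q := hinj _ (hrun' a le_rfl hap) _ hqS (by rw [hal, hql])
            rcases hqd with ⟨hq1, hq2⟩|⟨hq1, hq2⟩|⟨hq1, hq2⟩
            · omega
            · exact halo (by rw [show a - 1 = 2*m + 2*j - 1 from by omega]; exact hq2)
            · omega
          left
          intro j hj1 hj2
          rcases Nat.lt_or_ge j (k+1) with hlt | hge
          · exact hC j hj1 (by omega)
          · have hjk : j = k+1 := by omega
            subst hjk
            refine ⟨1, fun x hx => ?_⟩
            simp [dom] at hx
            rcases hx with h | h
            · rw [h, ← hp]; exact hpS
            · rw [h]; exact hjoin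
        · -- σ2 : p = 4m - 2(k+1) + 2
          have hjoin : 4*m - 2*(k+1) + 1 ∈ S := by
            by_contra hnot
            obtain ⟨b, hpb, hb4, hrun', hb1⟩ := right_end hsub hpS
            have hev := even_run hm1 hGale (a := p) (b := b) (by omega) hpb hb4 hrun'
              (by rw [show p - 1 = 4*m - 2*(k+1) + 1 from by omega]; exact hnot)
              (fun h => absurd h (by omega)) hb1
              (fun hb4m h1S => by
                have h4 := hrun' (4*m) (by omega) (by omega)
                have hl4 : tripleMorrisLab m (4*m) = alab 1 := by
                  have := lam_d2a (κ := 1) hm hme le_rfl (by omega)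
                  rwa [show 4*m - 2*1 + 2 = 4*m from by omega] at this
                have h1lab : tripleMorrisLab m 1 = 1 := lam_seg0 le_rfl (by omega)
                have := hinj _ h1S _ h4 (by rw [hl4, h1lab]; simp [alab])
                omega)
            rw [Nat.even_iff] at hev
            have hbodd : b % 2 = 1 := by omega
            have hj : 1 ≤ (4*m + 1 - b)/2 ∧ (4*m + 1 - b)/2 ≤ k ∧
                b = 4*m - 2*((4*m + 1 - b)/2) + 1 := by omega
            set j := (4*m + 1 - b)/2 with hjdef
            have hbl : tripleMorrisLab m b = blab m j := by
              rw [hj.2.2]; exact lam_d2b hm hme hj.1 (by omega)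
            obtain ⟨q, hqS, hql, hqd⟩ := domB j hj.1 (by omega) (hC j hj.1 hj.2.1)
            have hbq : b = q := hinj _ (hrun' b hpb le_rfl) _ hqS (by rw [hbl, hql])
            rcases hqd with ⟨hq1, hq2⟩|⟨hq1, hq2⟩|⟨hq1, hq2⟩
            · omega
            · omega
            · exact hb1 (by rw [show b + 1 = 4*m - 2*j + 2 from by omega]; exact hq2)
          left
          intro j hj1 hj2
          rcases Nat.lt_or_ge j (k+1) with hlt | hge
          · exact hC j hj1 (by omega)
          · have hjk : j = k+1 := by omega
            subst hjk
            refine ⟨2, fun x hx => ?_⟩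
            simp [dom] at hx
            rcases hx with h | h
            · rw [h]; exact hjoin
            · rw [h, ← hp]; exact hpS
      · -- Prefix branch, k ≥ 1
        right
        refine ⟨by omega, ?_⟩
        have halab1 : 1 ≤ alab k ∧ alab k ≤ 2*k ∧ alab k ≤ m := by
          unfold alab; split_ifs <;> omega
        have halabk : alab k ∈ S := hP (alab k) halab1.1 halab1.2.1
        have hlalabk : tripleMorrisLab m (alab k) = alab k := lam_seg0 halab1.1 halab1.2.2
        have h2k : 2*k ∈ S := hP _ (by omega) le_rfl
        have hl2k : tripleMorrisLab m (2*k) = 2*k := lam_seg0 (by omega) (by omega)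
        have h1S : (1:ℕ) ∈ S := hP 1 le_rfl (by omega)
        have h1lab : tripleMorrisLab m 1 = 1 := lam_seg0 le_rfl (by omega)
        have hav : alab (k+1) = 2*k := by unfold alab; rw [if_neg (by omega)]; omega
        have hi : 2*k+1 ∈ S := by
          obtain ⟨p, hpS, hpl⟩ := hex (2*k+1) (by omega) (by omega)
          have hbv : blab m k = 2*k+1 := by unfold blab; rw [if_neg (by omega)]
          have hp4 := hbound p hpS
          rcases lam_inv_b (κ := k) hm hme hp4.1 hp4.2 (by omega) (by omega)
            (by rw [hpl, hbv]) with h | h | h | h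
          · rw [hbv] at h; rwa [← h]
          · -- p = 2m - 2k + 1
            exfalso
            have hx : 2*m - 2*k ∉ S := by
              intro hx
              have hlx : tripleMorrisLab m (2*m - 2*k) = alab (k+1) := by
                have := lam_d0a (κ := k+1) hm hme (by omega) hκ2
                rwa [show 2*m - 2*(k+1) + 2 = 2*m - 2*k from by omega] at this
              have := hinj _ hx _ h2k (by rw [hlx, hav, hl2k])
              omega
            have hy : 2*m - 2*k + 2 ∉ S := by
              intro hy
              have hly : tripleMorrisLab m (2*m - 2*k + 2) = alab k :=
                lam_d0a hm hme (by omega) (by omega)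
              have := hinj _ hy _ halabk (by rw [hly, hlalabk])
              omega
            have hev := even_run hm1 hGale (a := p) (b := p) (by omega) le_rfl (by omega)
              (fun q hq1 hq2 => by rw [show q = p from by omega]; exact hpS)
              (by rw [show p - 1 = 2*m - 2*k from by omega]; exact hx)
              (fun h' => absurd h' (by omega))
              (by rw [show p + 1 = 2*m - 2*k + 2 from by omega]; exact hy)
              (fun h' => absurd h' (by omega))
            rw [Nat.even_iff] at hev; omega
          · -- p = 2m + 2k
            exfalso
            have hx : 2*m + 2*k - 1 ∉ S := by
              intro hx
              have hlx : tripleMorrisLab m (2*m + 2*k - 1) = alab k :=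
                lam_d1a hm hme (by omega) (by omega)
              have := hinj _ hx _ halabk (by rw [hlx, hlalabk])
              omega
            have hy : 2*m + 2*k + 1 ∉ S := by
              intro hy
              have hly : tripleMorrisLab m (2*m + 2*k + 1) = alab (k+1) := by
                have := lam_d1a (κ := k+1) hm hme (by omega) hκ2
                rwa [show 2*m + 2*(k+1) - 1 = 2*m + 2*k + 1 from by omega] at this
              have := hinj _ hy _ h2k (by rw [hly, hav, hl2k])
              omega
            have hev := even_run hm1 hGale (a := p) (b := p) (by omega) le_rfl (by omega)
              (fun q hq1 hq2 => by rw [show q = p from by omega]; exact hpS)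
              (by rw [show p - 1 = 2*m + 2*k - 1 from by omega]; exact hx)
              (fun h' => absurd h' (by omega))
              (by rw [show p + 1 = 2*m + 2*k + 1 from by omega]; exact hy)
              (fun h' => absurd h' (by omega))
            rw [Nat.even_iff] at hev; omega
          · -- p = 4m - 2k + 1
            exfalso
            have hx : 4*m - 2*k ∉ S := by
              intro hx
              have hlx : tripleMorrisLab m (4*m - 2*k) = alab (k+1) := by
                have := lam_d2a (κ := k+1) hm hme (by omega) hκ2
                rwa [show 4*m - 2*(k+1) + 2 = 4*m - 2*k from by omega] at this
              have := hinj _ hx _ h2k (by rw [hlx, hav, hl2k])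
              omega
            have hy : 4*m - 2*k + 2 ∉ S := by
              intro hy
              have hly : tripleMorrisLab m (4*m - 2*k + 2) = alab k :=
                lam_d2a hm hme (by omega) (by omega)
              have := hinj _ hy _ halabk (by rw [hly, hlalabk])
              omega
            have hev := even_run hm1 hGale (a := p) (b := p) (by omega) le_rfl (by omega)
              (fun q hq1 hq2 => by rw [show q = p from by omega]; exact hpS)
              (by rw [show p - 1 = 4*m - 2*k from by omega]; exact hx)
              (fun h' => absurd h' (by omega))
              (by rw [show p + 1 = 4*m - 2*k + 2 from by omega]; exact hy)
              (fun h' => absurd h' (by omega))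
            rw [Nat.even_iff] at hev; omega
        have hii : 2*k+2 ∈ S := by
          by_contra hnot
          have h4m : (4*m : ℕ) ∉ S := by
            intro h4
            have hl4 : tripleMorrisLab m (4*m) = alab 1 := by
              have := lam_d2a (κ := 1) hm hme le_rfl (by omega)
              rwa [show 4*m - 2*1 + 2 = 4*m from by omega] at this
            have := hinj _ h4 _ h1S (by rw [hl4, h1lab]; simp [alab])
            omega
          have hev := even_run hm1 hGale (a := 1) (b := 2*k+1) le_rfl (by omega) (by omega)
            (fun q hq1 hq2 => by
              rcases Nat.lt_or_ge (2*k) q with hgt | hle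
              · rw [show q = 2*k+1 from by omega]; exact hi
              · exact hP q hq1 hle)
            h0 (fun _ => h4m)
            (by rw [show 2*k+1+1 = 2*k+2 from by omega]; exact hnot)
            (fun h => absurd h (by omega))
          rw [Nat.even_iff] at hev; omega
        intro i hi1 hi2
        rcases Nat.lt_or_ge (2*k) i with hgt | hle
        · have : i = 2*k+1 ∨ i = 2*k+2 := by omega
          rcases this with rfl | rfl
          exacts [hi, hii]
        · exact hP i hi1 hle
  rcases main (m/2) le_rfl with hC | ⟨-, hP⟩
  · right
    have hsol : ∀ k : Fin (m/2), ∃ e : Fin 3, ∀ x ∈ dom m e (k.1+1), x ∈ S :=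
      fun k => hC (k.1+1) (by omega) (by have := k.2; omega)
    choose c hc using hsol
    refine ⟨c, ?_⟩
    have hsub' : sol m c ⊆ S := by
      intro x hx
      rw [mem_sol] at hx
      obtain ⟨k, hk⟩ := hx
      exact hc k x hk
    exact (Finset.eq_of_subset_of_card_le hsub'
      (by rw [hcard, card_sol hm hme])).symm
  · left
    have hsub' : Finset.Icc 1 m ⊆ S := by
      intro i hi
      rw [Finset.mem_Icc] at hi
      exact hP i hi.1 (by omega)
    exact (Finset.eq_of_subset_of_card_le hsub'
      (by rw [hcard, Nat.card_Icc]; omega)).symm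

end UVG

namespace UVG

lemma sol_valid {m : ℕ} (hm : 2 ≤ m) (hme : m % 2 = 0) (c : Fin (m/2) → Fin 3) :
    sol m c ⊆ Finset.Icc 1 (4*m) ∧ (sol m c).card = m ∧
      CyclicGaleEven (4*m) (fun i => decide (i ∈ sol m c)) ∧
      (sol m c).image (tripleMorrisLab m) = Finset.Icc 1 m := by
  refine ⟨?_, card_sol hm hme c, ?_, sol_image hm hme c⟩
  · exact (sol_subset hm hme c).trans (Finset.Icc_subset_Icc (by omega) le_rfl)
  · exact gale_of_pairs (by omega) (by omega) (fun q hq => sol_pair hme c hq)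

lemma icc_valid {m : ℕ} (hm : 2 ≤ m) (hme : m % 2 = 0) :
    Finset.Icc 1 m ⊆ Finset.Icc 1 (4*m) ∧ (Finset.Icc 1 m).card = m ∧
      CyclicGaleEven (4*m) (fun i => decide (i ∈ Finset.Icc 1 m)) ∧
      (Finset.Icc 1 m).image (tripleMorrisLab m) = Finset.Icc 1 m := by
  refine ⟨Finset.Icc_subset_Icc le_rfl (by omega), by rw [Nat.card_Icc]; omega, ?_,
    icc_image hm⟩
  exact gale_of_pairs (by omega) (by omega)
    (fun q hq => by simp only [Finset.mem_Icc]; omega)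

end UVG


/-- Proposition 4 of the paper: the number of bitstrings of length `4m`
(identified with their sets `S` of one-positions in `{1,…,4m}`) with exactly `m`
ones that satisfy the cyclic Gale evenness condition and are completely labeled
with respect to the triple Morris labeling equals `3^{m/2} + 1`; moreover, every
such bitstring other than `1^m 0^{3m}` has no one among the first `m` positions
(full support for player 1 in the corresponding `m × 3m` unit vector game). -/
theorem stmt11 {m : ℕ} (hm : 2 ≤ m) (hme : Even m) :
    {S : Finset ℕ | S ⊆ Finset.Icc 1 (4 * m) ∧ S.card = m ∧
        CyclicGaleEven (4 * m) (fun i => decide (i ∈ S)) ∧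
        S.image (tripleMorrisLab m) = Finset.Icc 1 m}.ncard = 3 ^ (m / 2) + 1 ∧
    ∀ S : Finset ℕ, S ⊆ Finset.Icc 1 (4 * m) → S.card = m →
      CyclicGaleEven (4 * m) (fun i => decide (i ∈ S)) →
      S.image (tripleMorrisLab m) = Finset.Icc 1 m →
      S ≠ Finset.Icc 1 m → ∀ i ∈ Finset.Icc 1 m, i ∉ S := by
  have hme' : m % 2 = 0 := Nat.even_iff.mp hme
  constructor
  · have hset : {S : Finset ℕ | S ⊆ Finset.Icc 1 (4 * m) ∧ S.card = m ∧
        CyclicGaleEven (4 * m) (fun i => decide (i ∈ S)) ∧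
        S.image (tripleMorrisLab m) = Finset.Icc 1 m} =
        ↑(insert (Finset.Icc 1 m)
          ((Finset.univ : Finset (Fin (m/2) → Fin 3)).image (UVG.sol m))) := by
      ext S
      simp only [Set.mem_setOf_eq, Finset.coe_insert, Set.mem_insert_iff, Finset.coe_image,
        Set.mem_image, Finset.mem_coe, Finset.mem_univ]
      constructor
      · rintro ⟨h1, h2, h3, h4⟩
        rcases UVG.classify hm hme' h1 h2 h3 h4 with h | ⟨c, h⟩
        · exact Or.inl h
        · exact Or.inr ⟨c, trivial, h.symm⟩
      · rintro (rfl | ⟨c, -, rfl⟩)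
        · exact UVG.icc_valid hm hme'
        · exact UVG.sol_valid hm hme' c
    rw [hset, Set.ncard_coe_finset, Finset.card_insert_of_notMem, Finset.card_image_of_injective _ (UVG.sol_injective hm hme'), Finset.card_univ, Fintype.card_fun, Fintype.card_fin, Fintype.card_fin]
    · intro hmem
      rw [Finset.mem_image] at hmem
      obtain ⟨c, -, hc⟩ := hmem
      have h1 : (1:ℕ) ∈ Finset.Icc 1 m := by rw [Finset.mem_Icc]; omega
      rw [← hc] at h1
      have := UVG.sol_subset hm hme' c h1
      rw [Finset.mem_Icc] at this; omega
  · intro S h1 h2 h3 h4 hne i hi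
    rcases UVG.classify hm hme' h1 h2 h3 h4 with h | ⟨c, rfl⟩
    · exact absurd h hne
    · intro hiS
      have := UVG.sol_subset hm hme' c hiS
      rw [Finset.mem_Icc] at this hi
      omega
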